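/- If S is an abelian subgroup of the n-qubit Pauli group not containing -I, generated by m independent generators, then the common +1 eigenspace of all elements of S (the code space) has dimension 2^(n-m). -/

import Mathlib

open Matrix

open Matrix

/-- The single-qubit Pauli matrices `I, X, Y, Z`. -/
noncomputable def pauliMat : Fin 4 → Matrix (Fin 2) (Fin 2) ℂ
  | 0 => 1
  | 1 => !![0, 1; 1, 0]
  | 2 => !![0, -Complex.I; Complex.I, 0]
  | 3 => !![1, 0; 0, -1]

/-- The tensor product `P_1 ⊗ ⋯ ⊗ P_n` of single-qubit Pauli matrices,
as a matrix acting on `(ℂ²)^⊗n` (indexed by `Fin n → Fin 2`). -/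
noncomputable def pauliTensor {n : ℕ} (s : Fin n → Fin 4) :
    Matrix (Fin n → Fin 2) (Fin n → Fin 2) ℂ :=
  Matrix.of fun f g => ∏ j, pauliMat (s j) (f j) (g j)

/-- The allowed phases `±1, ±i` in the Pauli group. -/
def IsPauliPhase (c : ℂ) : Prop :=
  c = 1 ∨ c = -1 ∨ c = Complex.I ∨ c = -Complex.I

/-- Membership in the `n`-qubit Pauli group: `U = c · (P_1 ⊗ ⋯ ⊗ P_n)`. -/
def IsPauli {n : ℕ} (U : Matrix (Fin n → Fin 2) (Fin n → Fin 2) ℂ) : Prop :=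
  ∃ (c : ℂ) (s : Fin n → Fin 4), IsPauliPhase c ∧ U = c • pauliTensor s

/-- The (ordered) product `∏_{j ∈ T} g j` of a subset of the generators;
since the generators are assumed to commute this represents the group
element associated to the subset `T`. -/
noncomputable def subsetProd {n m : ℕ}
    (g : Fin m → Matrix (Fin n → Fin 2) (Fin n → Fin 2) ℂ)
    (T : Finset (Fin m)) : Matrix (Fin n → Fin 2) (Fin n → Fin 2) ℂ :=
  (List.ofFn fun j : Fin m => if j ∈ T then g j else 1).prod

/-- The code space: the common `+1` eigenspace of all the generators. -/
noncomputable def codeSpace {n m : ℕ}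
    (g : Fin m → Matrix (Fin n → Fin 2) (Fin n → Fin 2) ℂ) :
    Submodule ℂ ((Fin n → Fin 2) → ℂ) :=
  ⨅ j, LinearMap.ker ((g j).mulVecLin - LinearMap.id)

open scoped symmDiff

/-! ### Single-qubit Pauli multiplication table -/

/-- Multiplication table for Pauli labels. -/
def pMul : Fin 4 → Fin 4 → Fin 4 := ![![0,1,2,3], ![1,0,3,2], ![2,3,0,1], ![3,2,1,0]]

/-- Phase table for Pauli multiplication. -/
noncomputable def pPhase : Fin 4 → Fin 4 → ℂ :=
  ![![1,1,1,1], ![1,1,Complex.I,-Complex.I], ![1,-Complex.I,1,Complex.I],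
    ![1,Complex.I,-Complex.I,1]]

lemma pauliMat_mul (a b : Fin 4) :
    pauliMat a * pauliMat b = pPhase a b • pauliMat (pMul a b) := by
  fin_cases a <;> fin_cases b <;>
    ext i j <;> fin_cases i <;> fin_cases j <;>
      simp [pauliMat, pMul, pPhase, Matrix.mul_apply, Fin.sum_univ_two, Matrix.one_apply] <;>
      norm_num [Matrix.vecHead, Matrix.vecTail]

lemma pPhase_isPhase (a b : Fin 4) : IsPauliPhase (pPhase a b) := by
  fin_cases a <;> fin_cases b <;> simp [pPhase, IsPauliPhase, Matrix.vecHead, Matrix.vecTail]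

lemma pauliMat_trace (a : Fin 4) : Matrix.trace (pauliMat a) = if a = 0 then 2 else 0 := by
  fin_cases a <;> simp [pauliMat, Matrix.trace, Matrix.diag, Fin.sum_univ_two]

lemma IsPauliPhase.mul {c d : ℂ} (hc : IsPauliPhase c) (hd : IsPauliPhase d) :
    IsPauliPhase (c * d) := by
  rcases hc with rfl | rfl | rfl | rfl <;> rcases hd with rfl | rfl | rfl | rfl <;>
    simp [IsPauliPhase, Complex.I_mul_I]

lemma IsPauliPhase.one : IsPauliPhase 1 := Or.inl rfl

/-! ### Tensor products of Paulis -/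

lemma pauliTensor_zero {n : ℕ} : pauliTensor (fun _ : Fin n => 0) = 1 := by
  ext f h
  show (∏ j, pauliMat 0 (f j) (h j)) = (1 : Matrix (Fin n → Fin 2) (Fin n → Fin 2) ℂ) f h
  have : ∀ j, pauliMat 0 (f j) (h j) = if f j = h j then 1 else 0 := by
    intro j; simp [pauliMat, Matrix.one_apply]
  simp only [this, Fintype.prod_boole, Matrix.one_apply, funext_iff]
  convert rfl using 2 <;> simp

lemma pauliTensor_mul {n : ℕ} (s t : Fin n → Fin 4) :
    pauliTensor s * pauliTensor t =
      (∏ j, pPhase (s j) (t j)) • pauliTensor (fun j => pMul (s j) (t j)) := by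
  ext f h
  have step1 : (pauliTensor s * pauliTensor t) f h
      = ∑ k : Fin n → Fin 2, ∏ j, (pauliMat (s j) (f j) (k j) * pauliMat (t j) (k j) (h j)) := by
    simp [Matrix.mul_apply, pauliTensor, Finset.prod_mul_distrib]
  have interchange := Fintype.prod_sum (κ := fun _ : Fin n => Fin 2)
    (fun (j : Fin n) (x : Fin 2) => pauliMat (s j) (f j) x * pauliMat (t j) x (h j))
  rw [step1, ← interchange]
  have step2 : ∀ j, (∑ x : Fin 2, pauliMat (s j) (f j) x * pauliMat (t j) x (h j))
      = pPhase (s j) (t j) * pauliMat (pMul (s j) (t j)) (f j) (h j) := by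
    intro j
    have := congrFun (congrFun (pauliMat_mul (s j) (t j)) (f j)) (h j)
    simpa [Matrix.mul_apply] using this
  simp only [step2]
  rw [Finset.prod_mul_distrib]
  simp [pauliTensor]

lemma trace_pauliTensor {n : ℕ} (s : Fin n → Fin 4) :
    Matrix.trace (pauliTensor s) = ∏ j, Matrix.trace (pauliMat (s j)) := by
  simp only [Matrix.trace, Matrix.diag, pauliTensor, Matrix.of_apply]
  exact (Fintype.prod_sum (κ := fun _ : Fin n => Fin 2) (fun j x => pauliMat (s j) x x)).symm

lemma IsPauli.one {n : ℕ} : IsPauli (1 : Matrix (Fin n → Fin 2) (Fin n → Fin 2) ℂ) :=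
  ⟨1, fun _ => 0, IsPauliPhase.one, by rw [pauliTensor_zero, one_smul]⟩

lemma IsPauli.mul {n : ℕ} {U V : Matrix (Fin n → Fin 2) (Fin n → Fin 2) ℂ}
    (hU : IsPauli U) (hV : IsPauli V) : IsPauli (U * V) := by
  obtain ⟨c, s, hc, rfl⟩ := hU
  obtain ⟨d, t, hd, rfl⟩ := hV
  refine ⟨c * d * ∏ j, pPhase (s j) (t j), fun j => pMul (s j) (t j), ?_, ?_⟩
  · exact (hc.mul hd).mul <| Finset.prod_induction _ _ (fun _ _ ha hb => ha.mul hb)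
      IsPauliPhase.one (fun a _ => pPhase_isPhase _ _)
  · rw [Matrix.smul_mul, Matrix.mul_smul, pauliTensor_mul, smul_smul, smul_smul, mul_assoc]

lemma IsPauli.list_prod {n : ℕ} :
    ∀ (L : List (Matrix (Fin n → Fin 2) (Fin n → Fin 2) ℂ)),
      (∀ A ∈ L, IsPauli A) → IsPauli L.prod
  | [], _ => by simpa using IsPauli.one
  | (A :: L), h => by
    rw [List.prod_cons]
    exact (h A (List.mem_cons_self)).mul
      (IsPauli.list_prod L fun B hB => h B (List.mem_cons_of_mem _ hB))

/-! ### Subset products -/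

lemma prod_symmDiff_of_sq_one {N : Type*} [CommMonoid N] {ι : Type*} [DecidableEq ι]
    (G : ι → N) (hG2 : ∀ j, G j * G j = 1) (T T' : Finset ι) :
    (∏ j ∈ T, G j) * ∏ j ∈ T', G j = ∏ j ∈ T ∆ T', G j := by
  have e1 : (∏ j ∈ T, G j) = (∏ j ∈ T \ T', G j) * ∏ j ∈ T ∩ T', G j := by
    rw [← Finset.prod_union (Finset.disjoint_sdiff_inter T T'), Finset.sdiff_union_inter]
  have e2 : (∏ j ∈ T', G j) = (∏ j ∈ T' \ T, G j) * ∏ j ∈ T ∩ T', G j := by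
    rw [Finset.inter_comm, ← Finset.prod_union (Finset.disjoint_sdiff_inter T' T),
      Finset.sdiff_union_inter]
  rw [e1, e2, mul_mul_mul_comm, ← Finset.prod_mul_distrib,
    Finset.prod_congr rfl (fun j _ => hG2 j), Finset.prod_const_one, mul_one,
    ← Finset.prod_union disjoint_sdiff_sdiff, symmDiff_def, Finset.sup_eq_union]

lemma subsetProd_eq_lift {n m : ℕ} (g : Fin m → Matrix (Fin n → Fin 2) (Fin n → Fin 2) ℂ)
    {N : Type*} [CommMonoid N] (ι : N →* Matrix (Fin n → Fin 2) (Fin n → Fin 2) ℂ)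
    (G : Fin m → N) (hG : ∀ j, ι (G j) = g j) (T : Finset (Fin m)) :
    subsetProd g T = ι (∏ j ∈ T, G j) := by
  have h1 : (∏ j ∈ T, G j) = ∏ j : Fin m, (if j ∈ T then G j else 1) := by
    rw [Finset.prod_ite_mem, Finset.univ_inter]
  rw [h1, ← Fin.prod_ofFn, map_list_prod, subsetProd, List.map_ofFn]
  have : (fun j : Fin m => if j ∈ T then g j else 1) = ⇑ι ∘ fun j => if j ∈ T then G j else 1 := by
    funext j
    simp only [Function.comp_apply, apply_ite ι, _root_.map_one, hG]
  rw [this]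

section
variable {n m : ℕ} {g : Fin m → Matrix (Fin n → Fin 2) (Fin n → Fin 2) ℂ}
  (hcomm : ∀ j l, g j * g l = g l * g j)

lemma subsetProd_empty : subsetProd g (∅ : Finset (Fin m)) = 1 := by
  refine List.prod_eq_one fun x hx => ?_
  obtain ⟨j, rfl⟩ := List.mem_ofFn.mp hx
  simp

include hcomm in
lemma subsetProd_singleton (j : Fin m) : subsetProd g {j} = g j := by
  letI : CommMonoid ↥(Submonoid.closure (Set.range g)) :=
    Submonoid.closureCommMonoidOfComm (M := Matrix (Fin n → Fin 2) (Fin n → Fin 2) ℂ)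
      (s := Set.range g) (by rintro _ ⟨j, rfl⟩ _ ⟨l, rfl⟩; exact hcomm j l)
  let G : Fin m → ↥(Submonoid.closure (Set.range g)) :=
    fun j => ⟨g j, Submonoid.subset_closure ⟨j, rfl⟩⟩
  let ι : ↥(Submonoid.closure (Set.range g)) →* Matrix (Fin n → Fin 2) (Fin n → Fin 2) ℂ :=
    { toFun := Subtype.val, map_one' := rfl, map_mul' := fun _ _ => rfl }
  have hG : ∀ j, ι (G j) = g j := fun j => rfl
  rw [subsetProd_eq_lift g ι G hG, Finset.prod_singleton]
  exact hG j

include hcomm in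
lemma subsetProd_mul (hsq : ∀ j, g j * g j = 1) (T T' : Finset (Fin m)) :
    subsetProd g T * subsetProd g T' = subsetProd g (T ∆ T') := by
  letI : CommMonoid ↥(Submonoid.closure (Set.range g)) :=
    Submonoid.closureCommMonoidOfComm (M := Matrix (Fin n → Fin 2) (Fin n → Fin 2) ℂ)
      (s := Set.range g) (by rintro _ ⟨j, rfl⟩ _ ⟨l, rfl⟩; exact hcomm j l)
  let G : Fin m → ↥(Submonoid.closure (Set.range g)) :=
    fun j => ⟨g j, Submonoid.subset_closure ⟨j, rfl⟩⟩
  let ι : ↥(Submonoid.closure (Set.range g)) →* Matrix (Fin n → Fin 2) (Fin n → Fin 2) ℂ :=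
    { toFun := Subtype.val, map_one' := rfl, map_mul' := fun _ _ => rfl }
  have hG : ∀ j, ι (G j) = g j := fun j => rfl
  have hl := subsetProd_eq_lift g ι G hG
  rw [hl, hl, hl, ← _root_.map_mul,
    prod_symmDiff_of_sq_one G (fun j => Subtype.ext (hsq j)) T T']

end

lemma list_prod_mulVec_fix {n : ℕ} (v : (Fin n → Fin 2) → ℂ) :
    ∀ (L : List (Matrix (Fin n → Fin 2) (Fin n → Fin 2) ℂ)),
      (∀ A ∈ L, A *ᵥ v = v) → L.prod *ᵥ v = v
  | [], _ => by simp [Matrix.one_mulVec]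
  | (A :: L), h => by
    rw [List.prod_cons, ← Matrix.mulVec_mulVec,
      list_prod_mulVec_fix v L (fun B hB => h B (List.mem_cons_of_mem _ hB)),
      h A (List.mem_cons_self)]

lemma sum_mulVec {n : ℕ} {ι : Type*} (s : Finset ι)
    (A : ι → Matrix (Fin n → Fin 2) (Fin n → Fin 2) ℂ) (v : (Fin n → Fin 2) → ℂ) :
    (∑ i ∈ s, A i) *ᵥ v = ∑ i ∈ s, A i *ᵥ v := by
  induction s using Finset.cons_induction with
  | empty => simp [Matrix.zero_mulVec]
  | cons a s ha ih => simp [Matrix.add_mulVec, ih]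

/-- A stabilizer group on `n` qubits generated by `m` independent,
commuting Pauli generators (squaring to the identity, with `-I` not in the
group) has a code space of dimension `2^(n-m)`. -/
theorem stabilizer_code_space_dim (n m : ℕ) (hmn : m ≤ n)
    (g : Fin m → Matrix (Fin n → Fin 2) (Fin n → Fin 2) ℂ)
    (hPauli : ∀ j, IsPauli (g j))
    (hcomm : ∀ j l, g j * g l = g l * g j)
    (hsq : ∀ j, g j * g j = 1)
    (hindep : ∀ T : Finset (Fin m), subsetProd g T = 1 → T = ∅)
    (hnegI : ∀ T : Finset (Fin m), subsetProd g T ≠ -1) :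
    Module.finrank ℂ (codeSpace g) = 2 ^ (n - m) := by
  classical
  set a : ℂ := ((2 : ℂ) ^ m)⁻¹ with ha
  set Q : Matrix (Fin n → Fin 2) (Fin n → Fin 2) ℂ := ∑ T : Finset (Fin m), subsetProd g T
    with hQ
  set P : Matrix (Fin n → Fin 2) (Fin n → Fin 2) ℂ := a • Q with hPdef
  have h2m : ((2 : ℂ) ^ m) ≠ 0 := pow_ne_zero _ two_ne_zero
  -- every g j is a subset product
  have hsingle : ∀ j, subsetProd g {j} = g j := subsetProd_singleton hcomm
  have hmul := subsetProd_mul hcomm hsq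
  -- membership in the code space
  have hmem : ∀ v, v ∈ codeSpace g ↔ ∀ j, g j *ᵥ v = v := by
    intro v
    simp [codeSpace, Submodule.mem_iInf, LinearMap.mem_ker, LinearMap.sub_apply,
      Matrix.mulVecLin_apply, sub_eq_zero]
  -- each g j stabilizes P
  have hgP : ∀ j, g j * P = P := by
    intro j
    rw [hPdef, Matrix.mul_smul, Finset.mul_sum]
    congr 1
    have hb : Function.Bijective (fun T : Finset (Fin m) => {j} ∆ T) :=
      Function.Involutive.bijective fun T => symmDiff_symmDiff_cancel_left {j} T
    calc ∑ T : Finset (Fin m), g j * subsetProd g T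
        = ∑ T : Finset (Fin m), subsetProd g ({j} ∆ T) := by
          refine Finset.sum_congr rfl fun T _ => ?_
          rw [← hsingle j, hmul]
      _ = Q := Fintype.sum_bijective _ hb _ _ (fun T => rfl)
  -- P is idempotent
  have hQQ : Q * Q = ((2 : ℕ) ^ m : ℕ) • Q := by
    rw [hQ, Finset.sum_mul_sum]
    have inner : ∀ T : Finset (Fin m),
        (∑ T' : Finset (Fin m), subsetProd g T * subsetProd g T') = Q := by
      intro T
      have hb : Function.Bijective (fun T' : Finset (Fin m) => T ∆ T') :=
        Function.Involutive.bijective fun T' => symmDiff_symmDiff_cancel_left T T'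
      calc ∑ T' : Finset (Fin m), subsetProd g T * subsetProd g T'
          = ∑ T' : Finset (Fin m), subsetProd g (T ∆ T') :=
            Finset.sum_congr rfl fun T' _ => hmul T T'
        _ = Q := Fintype.sum_bijective _ hb _ _ (fun T => rfl)
    rw [Finset.sum_congr rfl fun T _ => inner T, Finset.sum_const, Finset.card_univ,
      Fintype.card_finset, Fintype.card_fin]
  have hPP : P * P = P := by
    rw [hPdef, Matrix.smul_mul, Matrix.mul_smul, hQQ, ← Nat.cast_smul_eq_nsmul ℂ,
      smul_smul, smul_smul]
    congr 1
    push_cast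
    rw [ha]
    field_simp
  -- trace of nontrivial subset products vanishes
  have htr0 : ∀ T : Finset (Fin m), T ≠ ∅ → Matrix.trace (subsetProd g T) = 0 := by
    intro T hT
    have hp : IsPauli (subsetProd g T) := by
      refine IsPauli.list_prod _ fun A hA => ?_
      obtain ⟨j, rfl⟩ := List.mem_ofFn.mp hA
      by_cases hj : j ∈ T
      · simpa [hj] using hPauli j
      · simpa [hj] using IsPauli.one
    obtain ⟨c, s, hc, hEq⟩ := hp
    by_cases hs : ∀ j, s j = 0
    · exfalso
      have h1 : subsetProd g T = c • 1 := by
        rw [hEq]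
        congr 1
        rw [show s = fun _ => 0 from funext hs, pauliTensor_zero]
      have hsq2 : subsetProd g T * subsetProd g T = 1 := by
        rw [hmul, symmDiff_self, Finset.bot_eq_empty, subsetProd_empty]
      rw [h1, Matrix.smul_mul, Matrix.mul_smul, smul_smul, mul_one] at hsq2
      have hcc : c * c = 1 := by
        have := congrFun (congrFun hsq2 default) default
        simpa [Matrix.one_apply] using this
      rcases hc with rfl | rfl | rfl | rfl
      · exact hT (hindep T (by rw [h1, one_smul]))
      · exact hnegI T (by rw [h1, neg_smul, one_smul])
      · rw [Complex.I_mul_I] at hcc; norm_num at hcc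
      · rw [neg_mul_neg, Complex.I_mul_I] at hcc; norm_num at hcc
    · push_neg at hs
      obtain ⟨j0, hj0⟩ := hs
      rw [hEq, Matrix.trace_smul, trace_pauliTensor,
        Finset.prod_eq_zero (Finset.mem_univ j0) (by rw [pauliMat_trace, if_neg hj0]),
        smul_zero]
  -- trace of P
  have htrP : Matrix.trace P = (2 : ℂ) ^ (n - m) := by
    rw [hPdef, Matrix.trace_smul, hQ, Matrix.trace_sum]
    rw [Finset.sum_eq_single ∅ (fun T _ hT => htr0 T hT) (by simp)]
    rw [subsetProd_empty, Matrix.trace_one, Fintype.card_fun, Fintype.card_fin,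
      Fintype.card_fin]
    rw [ha, smul_eq_mul]
    push_cast
    rw [show ((2 : ℂ)) ^ n = 2 ^ m * 2 ^ (n - m) by
      rw [← pow_add, Nat.add_sub_cancel' hmn], inv_mul_cancel_left₀ h2m]
  -- P.mulVecLin is a projection onto the code space
  have hproj : LinearMap.IsProj (codeSpace g) P.mulVecLin := by
    constructor
    · intro x
      rw [hmem]
      intro j
      rw [Matrix.mulVecLin_apply, Matrix.mulVec_mulVec, hgP j]
    · intro x hx
      rw [hmem] at hx
      have hfix : ∀ T : Finset (Fin m), subsetProd g T *ᵥ x = x := by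
        intro T
        refine list_prod_mulVec_fix x _ fun A hA => ?_
        obtain ⟨j, rfl⟩ := List.mem_ofFn.mp hA
        by_cases hj : j ∈ T
        · simpa [hj] using hx j
        · simp [hj, Matrix.one_mulVec]
      rw [Matrix.mulVecLin_apply, hPdef, Matrix.smul_mulVec, hQ, sum_mulVec,
        Finset.sum_congr rfl fun T _ => hfix T, Finset.sum_const, Finset.card_univ,
        Fintype.card_finset, Fintype.card_fin, ← Nat.cast_smul_eq_nsmul ℂ, smul_smul, ha]
      push_cast
      rw [inv_mul_cancel₀ h2m, one_smul]
  -- conclude via the trace of the projection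
  have htrace : LinearMap.trace ℂ _ P.mulVecLin = Matrix.trace P := by
    rw [LinearMap.trace_eq_matrix_trace ℂ (Pi.basisFun ℂ (Fin n → Fin 2)),
      LinearMap.toMatrix_eq_toMatrix']
    congr 1
    rw [← Matrix.toLin'_apply']
    exact LinearMap.toMatrix'_toLin' P
  have hfr := hproj.trace
  rw [htrace, htrP] at hfr
  have : ((Module.finrank ℂ (codeSpace g) : ℕ) : ℂ) = ((2 ^ (n - m) : ℕ) : ℂ) := by
    rw [← hfr]; push_cast; ring
  exact_mod_cast this
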